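/- Let G be an r-uniform hypergraph on Z_n consisting of all r-subsets whose element sum mod n lies in a fixed set {j_1,...,j_t} of t distinct residues. If H is an r-uniform hypergraph whose line graph L(H) has chromatic number at least t+1, then G is H-free. -/

import Mathlib

/-- `G` contains no copy of the `r`-graph `H`. -/
def IsCopyFree {V W : Type*} [DecidableEq W]
    (H : Finset (Finset V)) (G : Finset (Finset W)) : Prop :=
  ¬ ∃ f : V → W, Function.Injective f ∧ ∀ e ∈ H, e.image f ∈ G

/-- The line graph of an `r`-uniform hypergraph. -/
def lineGraph {V : Type*} [DecidableEq V] (r : ℕ) (H : Finset (Finset V)) :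
    SimpleGraph {e // e ∈ H} where
  Adj e f := e ≠ f ∧ ((e : Finset V) ∩ (f : Finset V)).card = r - 1
  symm := by
    constructor
    intro e f h
    exact ⟨h.1.symm, by rw [Finset.inter_comm]; exact h.2⟩
  loopless := by
    constructor
    intro e h
    exact h.1 rfl

/-- Two distinct `r`-sets sharing `r-1` elements have distinct sums. -/
lemma sum_ne_of_inter {n : ℕ} (r : ℕ) (A B : Finset (ZMod n))
    (hA : A.card = r) (hB : B.card = r) (hAB : (A ∩ B).card = r - 1)
    (hne : A ≠ B) : (∑ i ∈ A, i) ≠ (∑ i ∈ B, i) := by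
  have hr : 1 ≤ r := by
    rcases Nat.eq_zero_or_pos r with h | h
    · exfalso; apply hne
      have hA0 : A = ∅ := Finset.card_eq_zero.mp (by rw [hA, h])
      have hB0 : B = ∅ := Finset.card_eq_zero.mp (by rw [hB, h])
      rw [hA0, hB0]
    · exact h
  have hsubA : A ∩ B ⊆ A := Finset.inter_subset_left
  have hsubB : A ∩ B ⊆ B := Finset.inter_subset_right
  have hca : (A \ (A ∩ B)).card = 1 := by
    rw [Finset.card_sdiff_of_subset hsubA, hA, hAB]; omega
  have hcb : (B \ (A ∩ B)).card = 1 := by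
    rw [Finset.card_sdiff_of_subset hsubB, hB, hAB]; omega
  obtain ⟨a, ha⟩ := Finset.card_eq_one.mp hca
  obtain ⟨b, hb⟩ := Finset.card_eq_one.mp hcb
  have haA : a ∈ A \ (A ∩ B) := by rw [ha]; exact Finset.mem_singleton_self a
  have hbB : b ∈ B \ (A ∩ B) := by rw [hb]; exact Finset.mem_singleton_self b
  rw [Finset.mem_sdiff] at haA hbB
  have hab : a ≠ b := by
    intro h
    exact haA.2 (Finset.mem_inter.mpr ⟨haA.1, h ▸ hbB.1⟩)
  have hsA : (∑ i ∈ A, i) = (∑ i ∈ A ∩ B, i) + a := by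
    rw [← Finset.sum_sdiff hsubA, ha, Finset.sum_singleton, add_comm]
  have hsB : (∑ i ∈ B, i) = (∑ i ∈ A ∩ B, i) + b := by
    rw [← Finset.sum_sdiff hsubB, hb, Finset.sum_singleton, add_comm]
  rw [hsA, hsB]
  intro h
  exact hab (by exact add_left_cancel h)

/-- the `r`-graph on `ℤ/n` of all `r`-subsets whose element sum lies in a
fixed set `s` of `t` distinct residues is `H`-free whenever `χ(L(H)) ≥ t + 1`. -/
theorem statement2 (n r t : ℕ) [NeZero n] (s : Finset (ZMod n)) (hs : s.card = t)
    {V : Type*} [Fintype V] [DecidableEq V] (H : Finset (Finset V))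
    (hH : ∀ e ∈ H, e.card = r)
    (hchi : ((t + 1 : ℕ) : ℕ∞) ≤ (lineGraph r H).chromaticNumber) :
    IsCopyFree H ((Finset.univ.powersetCard r).filter
      (fun A : Finset (ZMod n) => (∑ i ∈ A, i) ∈ s)) := by
  rintro ⟨f, hf, hcopy⟩
  -- each edge's image has sum in s
  have hmem : ∀ e : {e // e ∈ H}, (∑ i ∈ (e : Finset V).image f, i) ∈ s := by
    intro e
    have := hcopy e e.2
    simp only [Finset.mem_filter] at this
    exact this.2
  -- coloring
  have col : (lineGraph r H).Coloring ↥s :=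
    SimpleGraph.Coloring.mk
      (fun e => ⟨∑ i ∈ (e : Finset V).image f, i, hmem e⟩)
      (by
        intro e e' hadj heq
        obtain ⟨hne, hcard⟩ := hadj
        have h1 : ((e : Finset V).image f).card = r := by
          rw [Finset.card_image_of_injective _ hf, hH e e.2]
        have h2 : ((e' : Finset V).image f).card = r := by
          rw [Finset.card_image_of_injective _ hf, hH e' e'.2]
        have h3 : (((e : Finset V).image f) ∩ ((e' : Finset V).image f)).card = r - 1 := by
          rw [← Finset.image_inter _ _ hf, Finset.card_image_of_injective _ hf, hcard]
        have h4 : (e : Finset V).image f ≠ (e' : Finset V).image f := by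
          intro h
          exact hne (Subtype.ext (Finset.image_injective hf h))
        exact sum_ne_of_inter r _ _ h1 h2 h3 h4 (congrArg Subtype.val heq))
  have hcolorable : (lineGraph r H).Colorable t := by
    have := col.colorable
    rwa [Fintype.card_coe, hs] at this
  have hle := hcolorable.chromaticNumber_le
  have : ((t + 1 : ℕ) : ℕ∞) ≤ (t : ℕ∞) := le_trans hchi hle
  simp only [Nat.cast_le] at this
  omega
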